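/- Let G be a finite simple graph with clique vertex partition π = {A_1, …, A_t} and let G^π be the associated clique-whiskered graph with whisker vertices v_1, …, v_t. Then for every minimal vertex cover C of G^π and every i ∈ {1, …, t}, one has |N_{G^π}[v_i] ∩ C| = |N_{G^π}[v_i]| − 1. -/

import Mathlib

open scoped Classical

namespace PaperHS

/-- A set of vertices is a vertex cover of a simple graph if it meets every edge. -/
def IsVertexCover {U : Type*} (H : SimpleGraph U) (C : Set U) : Prop :=
  ∀ ⦃a b : U⦄, H.Adj a b → a ∈ C ∨ b ∈ C

/-- A vertex cover is minimal if no proper subset is a vertex cover. -/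
def IsMinVertexCover {U : Type*} (H : SimpleGraph U) (C : Set U) : Prop :=
  IsVertexCover H C ∧ ∀ D : Set U, D ⊂ C → ¬ IsVertexCover H D

/-- The closed neighborhood `N_H[v]`. -/
def closedNbhd {U : Type*} (H : SimpleGraph U) (v : U) : Set U :=
  insert v (H.neighborSet v)

/-- The clique-whiskered graph `G^π`: vertices of `G` together with one whisker
vertex `v_i` (encoded `Sum.inr i`) for each clique `A i` of the partition,
joined to all vertices of `A i`. -/
def cliqueWhisker {V ι : Type*} (G : SimpleGraph V) (A : ι → Set V) :
    SimpleGraph (V ⊕ ι) :=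
  SimpleGraph.fromRel (fun x y =>
    match x, y with
    | Sum.inl a, Sum.inl b => G.Adj a b
    | Sum.inl a, Sum.inr i => a ∈ A i
    | _, _ => False)

theorem statement0 {V ι : Type*} [Fintype V] [Fintype ι]
    (G : SimpleGraph V) (A : ι → Set V)
    (hA : ∀ a : V, ∃! i, a ∈ A i)
    (hclique : ∀ i, G.IsClique (A i))
    (C : Set (V ⊕ ι))
    (hC : IsMinVertexCover (cliqueWhisker G A) C) (i : ι) :
    (closedNbhd (cliqueWhisker G A) (Sum.inr i) ∩ C).ncard
      = (closedNbhd (cliqueWhisker G A) (Sum.inr i)).ncard - 1 := by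
  classical
  set H := cliqueWhisker G A with hH
  have hadj : ∀ x : V ⊕ ι, H.Adj (Sum.inr i) x ↔ ∃ a, x = Sum.inl a ∧ a ∈ A i := by
    intro x
    cases x with
    | inl a =>
      simp only [hH, cliqueWhisker, SimpleGraph.fromRel_adj]
      constructor
      · rintro ⟨-, h⟩
        simp only [or_false, false_or] at h
        exact ⟨a, rfl, h⟩
      · rintro ⟨b, hb, hmem⟩
        cases hb
        exact ⟨by simp, Or.inr hmem⟩
    | inr j =>
      simp only [hH, cliqueWhisker, SimpleGraph.fromRel_adj]
      constructor
      · rintro ⟨-, h⟩; simp at h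
      · rintro ⟨b, hb, -⟩; simp at hb
  have hadjll : ∀ a b : V, a ∈ A i → b ∈ A i → a ≠ b → H.Adj (Sum.inl a) (Sum.inl b) := by
    intro a b ha hb hne
    simp only [hH, cliqueWhisker, SimpleGraph.fromRel_adj]
    exact ⟨by simpa using hne, Or.inl (hclique i ha hb hne)⟩
  set N := closedNbhd H (Sum.inr i) with hN
  have hNdef : ∀ x, x ∈ N ↔ x = Sum.inr i ∨ ∃ a, x = Sum.inl a ∧ a ∈ A i := by
    intro x
    simp [hN, closedNbhd, SimpleGraph.mem_neighborSet, hadj]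
  obtain ⟨hcov, hmin⟩ := hC
  have key : ∃ x ∈ N, N \ C = {x} := by
    by_cases hv : Sum.inr i ∈ C
    · have hsub : C \ {Sum.inr i} ⊂ C := by
        constructor
        · exact Set.diff_subset
        · intro h
          have := h hv
          simp at this
      have hnc := hmin _ hsub
      rw [IsVertexCover] at hnc
      push_neg at hnc
      obtain ⟨a, b, hab, ha, hb⟩ := hnc
      -- one of a, b is Sum.inr i
      have hone : ∃ c : V, c ∈ A i ∧ Sum.inl c ∉ C := by
        rcases hcov hab with h1 | h1
        · have ha' : a = Sum.inr i := by
            by_contra h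
            exact ha ⟨h1, h⟩
          subst ha'
          obtain ⟨c, rfl, hc⟩ := (hadj b).mp hab
          refine ⟨c, hc, ?_⟩
          intro hcC
          exact hb ⟨hcC, by simp⟩
        · have hb' : b = Sum.inr i := by
            by_contra h
            exact hb ⟨h1, h⟩
          subst hb'
          obtain ⟨c, rfl, hc⟩ := (hadj a).mp hab.symm
          refine ⟨c, hc, ?_⟩
          intro hcC
          exact ha ⟨hcC, by simp⟩
      obtain ⟨c, hc, hcC⟩ := hone
      refine ⟨Sum.inl c, (hNdef _).mpr (Or.inr ⟨c, rfl, hc⟩), ?_⟩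
      ext x
      simp only [Set.mem_diff, Set.mem_singleton_iff]
      constructor
      · rintro ⟨hxN, hxC⟩
        rcases (hNdef x).mp hxN with rfl | ⟨d, rfl, hd⟩
        · exact absurd hv hxC
        · by_contra hne
          have hdc : d ≠ c := fun h => hne (by rw [h])
          rcases hcov (hadjll d c hd hc hdc) with h | h
          · exact hxC h
          · exact hcC h
      · rintro rfl
        exact ⟨(hNdef _).mpr (Or.inr ⟨c, rfl, hc⟩), hcC⟩
    · refine ⟨Sum.inr i, (hNdef _).mpr (Or.inl rfl), ?_⟩
      ext x
      simp only [Set.mem_diff, Set.mem_singleton_iff]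
      constructor
      · rintro ⟨hxN, hxC⟩
        rcases (hNdef x).mp hxN with rfl | ⟨d, rfl, hd⟩
        · rfl
        · exfalso
          rcases hcov ((hadj (Sum.inl d)).mpr ⟨d, rfl, hd⟩) with h | h
          · exact hv h
          · exact hxC h
      · rintro rfl
        exact ⟨(hNdef _).mpr (Or.inl rfl), hv⟩
  obtain ⟨x, hxN, hdiff⟩ := key
  have hx : x ∉ C := by
    have : x ∈ N \ C := hdiff ▸ rfl
    exact this.2
  have hinter : N ∩ C = N \ {x} := by
    ext y
    simp only [Set.mem_inter_iff, Set.mem_diff, Set.mem_singleton_iff]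
    constructor
    · rintro ⟨hyN, hyC⟩
      refine ⟨hyN, ?_⟩
      rintro rfl
      exact hx hyC
    · rintro ⟨hyN, hyx⟩
      refine ⟨hyN, ?_⟩
      by_contra hyc
      have : y ∈ N \ C := ⟨hyN, hyc⟩
      rw [hdiff] at this
      exact hyx this
  rw [hinter]
  exact Set.ncard_diff_singleton_of_mem hxN

end PaperHS
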